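/- For reals a, b, c and T ∈ (0,∞), the double integral I(a,b,c)_T = ∫₀ᵀ r^a (∫ᵣᵀ s^b (s-r)^c ds) dr is finite if and only if a > -1, c > -1, and a + b + c > -2. Moreover, when finite, I(a,b,c)_T = (∫₀¹ r^a (1-r)^c dr) · T^{a+b+c+2}/(a+b+c+2). -/

import Mathlib

open MeasureTheory Set

private lemma meas_beta (a c : ℝ) : Measurable (fun u : ℝ => u ^ a * (1 - u) ^ c) :=
  (measurable_id.pow measurable_const).mul
    ((measurable_const.sub measurable_id).pow measurable_const)

private lemma bound_rpow (c x : ℝ) (hx : (1/2:ℝ) ≤ x) (hx1 : x ≤ 1) :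
    min ((1/2:ℝ) ^ c) 1 ≤ x ^ c ∧ x ^ c ≤ max ((1/2:ℝ) ^ c) 1 := by
  rcases le_total 0 c with hc | hc
  · refine ⟨le_trans (min_le_left _ _) (Real.rpow_le_rpow (by norm_num) hx hc),
      le_trans (Real.rpow_le_one (by linarith) hx1 hc) (le_max_right _ _)⟩
  · constructor
    · refine le_trans (min_le_right _ _) ?_
      calc (1:ℝ) = 1 ^ c := (Real.one_rpow c).symm
        _ ≤ x ^ c := Real.rpow_le_rpow_of_nonpos (by linarith) hx1 hc
    · exact le_trans (Real.rpow_le_rpow_of_nonpos (by norm_num) hx hc) (le_max_left _ _)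

private lemma left_half_iff (a c : ℝ) :
    IntegrableOn (fun u : ℝ => u ^ a * (1 - u) ^ c) (Ioo 0 (1/2:ℝ)) ↔ -1 < a := by
  set m := min ((1/2:ℝ) ^ c) 1 with hm
  set M := max ((1/2:ℝ) ^ c) 1 with hM
  have hm0 : 0 < m := lt_min (Real.rpow_pos_of_pos (by norm_num) c) one_pos
  constructor
  · intro h
    rw [← intervalIntegral.integrableOn_Ioo_rpow_iff (by norm_num : (0:ℝ) < 1/2) (s := a)]
    have h' : IntegrableOn (fun u : ℝ => m⁻¹ * (u ^ a * (1 - u) ^ c)) (Ioo 0 (1/2:ℝ)) :=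
      h.const_mul _
    refine h'.mono' (measurable_id.pow measurable_const).aestronglyMeasurable ?_
    filter_upwards [ae_restrict_mem measurableSet_Ioo] with u hu
    simp only [mem_Ioo] at hu
    have hb := (bound_rpow c (1 - u) (by linarith [hu.2]) (by linarith [hu.1])).1
    rw [Real.norm_eq_abs, abs_of_nonneg (Real.rpow_nonneg hu.1.le a)]
    calc u ^ a = m⁻¹ * (m * u ^ a) := by field_simp
      _ ≤ m⁻¹ * (u ^ a * (1 - u) ^ c) := by
          refine mul_le_mul_of_nonneg_left ?_ (inv_nonneg.mpr hm0.le)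
          rw [mul_comm m]
          exact mul_le_mul_of_nonneg_left hb (Real.rpow_nonneg hu.1.le a)
  · intro ha
    have hi : IntegrableOn (fun u : ℝ => u ^ a) (Ioo 0 (1/2:ℝ)) :=
      (intervalIntegral.integrableOn_Ioo_rpow_iff (by norm_num)).mpr ha
    refine (hi.const_mul M).mono' (meas_beta a c).aestronglyMeasurable ?_
    filter_upwards [ae_restrict_mem measurableSet_Ioo] with u hu
    simp only [mem_Ioo] at hu
    have hb := (bound_rpow c (1 - u) (by linarith [hu.2]) (by linarith [hu.1])).2
    rw [Real.norm_eq_abs, abs_of_nonneg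
      (mul_nonneg (Real.rpow_nonneg hu.1.le a) (Real.rpow_nonneg (by linarith [hu.2]) c))]
    calc u ^ a * (1 - u) ^ c ≤ u ^ a * M :=
        mul_le_mul_of_nonneg_left hb (Real.rpow_nonneg hu.1.le a)
      _ = M * u ^ a := mul_comm _ _

private lemma right_half_iff (a c : ℝ) :
    IntegrableOn (fun u : ℝ => u ^ a * (1 - u) ^ c) (Ioo (1/2:ℝ) 1) ↔ -1 < c := by
  have hmp : MeasurePreserving (fun x : ℝ => 1 - x) volume volume :=
    Measure.measurePreserving_sub_left volume 1
  have hemb : MeasurableEmbedding (fun x : ℝ => 1 - x) :=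
    (MeasurableEquiv.subLeft (1:ℝ)).measurableEmbedding
  have hpre : (fun x : ℝ => 1 - x) ⁻¹' (Ioo (1/2:ℝ) 1) = Ioo (0:ℝ) (1/2) := by
    ext x
    simp only [mem_preimage, mem_Ioo]
    constructor <;> rintro ⟨h1, h2⟩ <;> constructor <;> linarith
  rw [← hmp.integrableOn_comp_preimage hemb, hpre]
  have : ((fun u : ℝ => u ^ a * (1 - u) ^ c) ∘ (fun x : ℝ => 1 - x)) =
      fun u : ℝ => u ^ c * (1 - u) ^ a := by
    funext u
    simp only [Function.comp_apply, sub_sub_cancel]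
    ring
  rw [this, left_half_iff]

private lemma beta_int_iff (a c : ℝ) :
    IntegrableOn (fun u : ℝ => u ^ a * (1 - u) ^ c) (Ioo (0:ℝ) 1) ↔ (-1 < a ∧ -1 < c) := by
  have hsplit : Ioo (0:ℝ) 1 = Ioc 0 (1/2) ∪ Ioo (1/2) 1 :=
    (Set.Ioc_union_Ioo_eq_Ioo (by norm_num) (by norm_num)).symm
  rw [hsplit, integrableOn_union, integrableOn_Ioc_iff_integrableOn_Ioo,
    left_half_iff, right_half_iff]

theorem stmt3 (a b c T : ℝ) (hT : 0 < T) :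
    (IntegrableOn (fun p : ℝ × ℝ => p.1 ^ a * p.2 ^ b * (p.2 - p.1) ^ c)
        {p : ℝ × ℝ | 0 < p.1 ∧ p.1 < p.2 ∧ p.2 < T} ↔
      (-1 < a ∧ -1 < c ∧ -2 < a + b + c)) ∧
    ((-1 < a ∧ -1 < c ∧ -2 < a + b + c) →
      (∫ p in {p : ℝ × ℝ | 0 < p.1 ∧ p.1 < p.2 ∧ p.2 < T},
          p.1 ^ a * p.2 ^ b * (p.2 - p.1) ^ c) =
        (∫ r in (0:ℝ)..1, r ^ a * (1 - r) ^ c) * T ^ (a + b + c + 2) / (a + b + c + 2)) := by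
  set e := a + b + c + 1 with he
  set f : ℝ × ℝ → ℝ := fun p => p.1 ^ a * p.2 ^ b * (p.2 - p.1) ^ c with hf
  set g : ℝ → ℝ := fun u => u ^ a * (1 - u) ^ c with hg
  set h : ℝ → ℝ := fun s => s ^ e with hh
  set G : ℝ × ℝ → ℝ := fun p => g p.1 * h p.2 with hG
  set S : Set (ℝ × ℝ) := Ioo (0:ℝ) 1 ×ˢ Ioo (0:ℝ) T with hS
  set Ω : Set (ℝ × ℝ) := {p : ℝ × ℝ | 0 < p.1 ∧ p.1 < p.2 ∧ p.2 < T} with hΩ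
  set φ : ℝ × ℝ → ℝ × ℝ := fun p => (p.2 * p.1, p.2) with hφ
  have hSm : MeasurableSet S := measurableSet_Ioo.prod measurableSet_Ioo
  set B : ℝ × ℝ → (ℝ × ℝ →L[ℝ] ℝ × ℝ) := fun p =>
    LinearMap.toContinuousLinearMap (Matrix.toLin (Module.Basis.finTwoProd ℝ) (Module.Basis.finTwoProd ℝ)
      !![p.2, p.1; 0, 1]) with hB
  have hderiv : ∀ p : ℝ × ℝ, HasFDerivAt φ (B p) p := by
    intro p
    have h1 : HasFDerivAt (fun q : ℝ × ℝ => q.2 * q.1)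
        (p.2 • ContinuousLinearMap.fst ℝ ℝ ℝ + p.1 • ContinuousLinearMap.snd ℝ ℝ ℝ) p :=
      hasFDerivAt_snd.mul hasFDerivAt_fst
    have h2 : HasFDerivAt (fun q : ℝ × ℝ => q.2) (ContinuousLinearMap.snd ℝ ℝ ℝ) p :=
      hasFDerivAt_snd
    simp only [hB]
    rw [Matrix.toLin_finTwoProd_toContinuousLinearMap]
    refine (h1.prodMk h2).congr_fderiv ?_; ext x <;> simp
  have hdet : ∀ p : ℝ × ℝ, (B p).det = p.2 := by
    intro p
    simp [hB, LinearMap.det_toContinuousLinearMap, LinearMap.det_toLin, Matrix.det_fin_two_of]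
  have hinj : Set.InjOn φ S := by
    rintro ⟨u, s⟩ hq ⟨u', s'⟩ hq' hqq
    simp only [hφ, Prod.mk.injEq] at hqq
    obtain ⟨h1, h2⟩ := hqq
    subst h2
    have hs0 : (0:ℝ) < s := hq.2.1
    have : u = u' := mul_left_cancel₀ hs0.ne' h1
    simp [this]
  have himg : φ '' S = Ω := by
    ext ⟨r, s⟩
    constructor
    · rintro ⟨⟨u, s'⟩, ⟨hu, hs⟩, heq⟩
      simp only [hφ, Prod.mk.injEq] at heq
      obtain ⟨rfl, rfl⟩ := heq
      simp only [mem_Ioo] at hu hs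
      exact ⟨mul_pos hs.1 hu.1, mul_lt_of_lt_one_right hs.1 hu.2, hs.2⟩
    · rintro ⟨hr, hrs, hsT⟩
      have hs0 : (0:ℝ) < s := hr.trans hrs
      refine ⟨(r / s, s), ⟨⟨div_pos hr hs0, (div_lt_one hs0).mpr hrs⟩, ⟨hs0, hsT⟩⟩, ?_⟩
      simp only [hφ]
      rw [mul_div_cancel₀ _ hs0.ne']
  have hcong : Set.EqOn (fun x => |(B x).det| • f (φ x)) G S := by
    rintro ⟨u, s⟩ ⟨hu, hs⟩
    simp only [mem_Ioo] at hu hs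
    have hs0 : (0:ℝ) < s := hs.1
    have hu0 : (0:ℝ) < u := hu.1
    have h1u : (0:ℝ) < 1 - u := by linarith [hu.2]
    simp only [hdet, hφ, hf, hG, hg, hh, smul_eq_mul]
    rw [abs_of_pos hs0, Real.mul_rpow hs0.le hu0.le,
      show s - s * u = s * (1 - u) by ring, Real.mul_rpow hs0.le h1u.le, he,
      show a + b + c + 1 = a + (b + (c + 1)) by ring,
      Real.rpow_add hs0, Real.rpow_add hs0, Real.rpow_add hs0, Real.rpow_one]
    ring
  have hrest : volume.restrict S =
      ((volume : Measure ℝ).restrict (Ioo 0 1)).prod ((volume : Measure ℝ).restrict (Ioo 0 T)) := by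
    rw [hS, Measure.prod_restrict, ← Measure.volume_eq_prod]
  have hmg : Measurable g := meas_beta a c
  have hmh : Measurable h := measurable_id.pow measurable_const
  have hGiff : IntegrableOn G S ↔
      (IntegrableOn g (Ioo (0:ℝ) 1) ∧ IntegrableOn h (Ioo (0:ℝ) T)) := by
    rw [IntegrableOn, hrest]
    constructor
    · intro hI
      have hmeas : AEStronglyMeasurable G
          (((volume : Measure ℝ).restrict (Ioo 0 1)).prod
            ((volume : Measure ℝ).restrict (Ioo 0 T))) :=
        ((hmg.comp measurable_fst).mul (hmh.comp measurable_snd)).aestronglyMeasurable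
      have hne1 : ((volume : Measure ℝ).restrict (Ioo 0 1)) ≠ 0 := by
        simp [Measure.restrict_eq_zero, Real.volume_Ioo]
      have hne2 : ((volume : Measure ℝ).restrict (Ioo 0 T)) ≠ 0 := by
        simp [Measure.restrict_eq_zero, Real.volume_Ioo, hT]
      haveI := ae_neBot.mpr hne1
      haveI := ae_neBot.mpr hne2
      have h1 := ((integrable_prod_iff hmeas).mp hI).1
      have h2 := ((integrable_prod_iff' hmeas).mp hI).1
      obtain ⟨u, hslice, hu⟩ := (h1.and (ae_restrict_mem measurableSet_Ioo)).exists
      obtain ⟨s, hslice', hsmem⟩ := (h2.and (ae_restrict_mem measurableSet_Ioo)).exists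
      have hgu : 0 < g u := mul_pos (Real.rpow_pos_of_pos hu.1 a)
        (Real.rpow_pos_of_pos (by linarith [hu.2]) c)
      have hhs : 0 < h s := Real.rpow_pos_of_pos hsmem.1 e
      constructor
      · have := hslice'.mul_const (h s)⁻¹
        simp [hG, mul_inv_cancel_right₀ hhs.ne'] at this; exact this
      · have := hslice.const_mul (g u)⁻¹
        simp [hG, inv_mul_cancel_left₀ hgu.ne'] at this; exact this
    · rintro ⟨h1, h2⟩
      exact h1.mul_prod h2
  have key : IntegrableOn f Ω ↔ IntegrableOn G S := by
    rw [← himg,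
      integrableOn_image_iff_integrableOn_abs_det_fderiv_smul volume hSm
        (fun x _ => (hderiv x).hasFDerivWithinAt) hinj f,
      integrableOn_congr_fun hcong hSm]
  have hiff : IntegrableOn f Ω ↔ (-1 < a ∧ -1 < c ∧ -2 < a + b + c) := by
    rw [key, hGiff, hg, hh, beta_int_iff, intervalIntegral.integrableOn_Ioo_rpow_iff hT]
    constructor
    · rintro ⟨⟨ha, hc⟩, he'⟩
      exact ⟨ha, hc, by rw [he] at he'; linarith⟩
    · rintro ⟨ha, hc, habc⟩
      exact ⟨⟨ha, hc⟩, by rw [he]; linarith⟩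
  refine ⟨hiff, ?_⟩
  rintro ⟨ha, hc, habc⟩
  have he' : -1 < e := by rw [he]; linarith
  calc ∫ p in Ω, f p
      = ∫ p in S, |(B p).det| • f (φ p) := by
        rw [← himg]
        exact integral_image_eq_integral_abs_det_fderiv_smul volume hSm
          (fun x _ => (hderiv x).hasFDerivWithinAt) hinj f
    _ = ∫ p in S, G p := setIntegral_congr_fun hSm hcong
    _ = (∫ u in Ioo (0:ℝ) 1, g u) * ∫ s in Ioo (0:ℝ) T, h s := by
        rw [show ∫ p in S, G p = ∫ p, G p ∂(volume.restrict S) from rfl, hrest]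
        exact integral_prod_mul g h
    _ = (∫ r in (0:ℝ)..1, r ^ a * (1 - r) ^ c) * (T ^ (a + b + c + 2) / (a + b + c + 2)) := by
        congr 1
        · rw [intervalIntegral.integral_of_le zero_le_one, integral_Ioc_eq_integral_Ioo]
        · have : ∫ s in Ioo (0:ℝ) T, h s = ∫ s in (0:ℝ)..T, s ^ e := by
            rw [intervalIntegral.integral_of_le hT.le, integral_Ioc_eq_integral_Ioo]
          rw [this, integral_rpow (Or.inl he'), Real.zero_rpow (by rw [he]; linarith),
            show e + 1 = a + b + c + 2 by rw [he]; ring, sub_zero]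
    _ = (∫ r in (0:ℝ)..1, r ^ a * (1 - r) ^ c) * T ^ (a + b + c + 2) / (a + b + c + 2) := by
        rw [mul_div_assoc]
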